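/- Let f be a feasible flow over time in a single-sink network N, let e be an edge, and let (a,b) ⊆ ℝ≥0 be an interval such that f⁺_e(ζ) = 0 for almost every ζ ∈ (a,b). Then q_e(θ) = max{q_e(a) − ν_e·(θ − a), 0} for all θ ∈ [a,b]. In particular, the queue length q_e and the instantaneous travel time c_e(θ) = τ_e + q_e(θ)/ν_e are convex functions on [a,b], and so is θ ↦ c_e(θ) + ℓ(θ) for any affine function ℓ. -/

import Mathlib

open MeasureTheory Set

/-- A walk in a directed graph given by `tail`/`head` maps: `IsWalk tail head v w L`
means the list of edges `L` forms a walk from `v` to `w`. -/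
def IsWalk {V E : Type} (tail head : E → V) : V → V → List E → Prop
  | v, w, [] => v = w
  | v, w, e :: L => tail e = v ∧ IsWalk tail head (head e) w L

/-- A right-constant step function with finitely many jump points. -/
def RightConstantStep (g : ℝ → ℝ) : Prop :=
  ∃ s : Finset ℝ, ∀ x y : ℝ, x ≤ y → (∀ p ∈ s, ¬ (x < p ∧ p ≤ y)) → g x = g y

/-- A single-sink network: a finite directed graph with positive rational capacities
and travel times, a sink reachable from every node, and nonnegative rational-valued
right-constant step network inflow rates (zero at the sink and for negative times). -/
structure Network (V E : Type) [Fintype V] [DecidableEq V] [Fintype E] [DecidableEq E] where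
  tail : E → V
  head : E → V
  cap : E → ℝ
  time : E → ℝ
  sink : V
  u : V → ℝ → ℝ
  cap_pos : ∀ e, 0 < cap e
  cap_rat : ∀ e, ∃ q : ℚ, cap e = (q : ℝ)
  time_pos : ∀ e, 0 < time e
  time_rat : ∀ e, ∃ q : ℚ, time e = (q : ℝ)
  reach : ∀ v, ∃ L : List E, IsWalk tail head v sink L
  u_nonneg : ∀ v θ, 0 ≤ u v θ
  u_rat : ∀ v θ, ∃ q : ℚ, u v θ = (q : ℝ)
  u_sink : ∀ θ, u sink θ = 0
  u_neg : ∀ v θ, θ < 0 → u v θ = 0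
  u_step : ∀ v, RightConstantStep (u v)

variable {V E : Type} [Fintype V] [DecidableEq V] [Fintype E] [DecidableEq E]

/-- The edges leaving a node `v`, i.e. `δ⁺(v)`. -/
def Network.outEdges (N : Network V E) (v : V) : Finset E :=
  Finset.univ.filter (fun e => N.tail e = v)

/-- The edges entering a node `v`, i.e. `δ⁻(v)`. -/
def Network.inEdges (N : Network V E) (v : V) : Finset E :=
  Finset.univ.filter (fun e => N.head e = v)

/-- `τ_min`, the minimal travel time of an edge. -/
noncomputable def Network.tauMin (N : Network V E) : ℝ := sInf (Set.range N.time)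

/-- `max_ζ u_v(ζ)`, the maximal network inflow rate at `v`. -/
noncomputable def Network.uMax (N : Network V E) (v : V) : ℝ := ⨆ θ : ℝ, N.u v θ

/-- The maximal out-degree `Δ` of the network. -/
def Network.maxOutDeg (N : Network V E) : ℕ :=
  Finset.univ.sup (fun v => (N.outEdges v).card)

/-- All network inflow rates have bounded support. -/
def Network.BddInflow (N : Network V E) : Prop :=
  ∀ v, ∃ B : ℝ, ∀ θ, B ≤ θ → N.u v θ = 0

/-- The directed graph of the network is acyclic. -/
def Network.Acyclic (N : Network V E) : Prop :=
  ∀ (v : V) (L : List E), L ≠ [] → ¬ IsWalk N.tail N.head v v L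

/-- A flow over time: locally integrable nonnegative edge in- and outflow rates. -/
structure FlowOverTime (N : Network V E) where
  fplus : E → ℝ → ℝ
  fminus : E → ℝ → ℝ
  fplus_nonneg : ∀ e θ, 0 ≤ fplus e θ
  fminus_nonneg : ∀ e θ, 0 ≤ fminus e θ
  fplus_int : ∀ e θ, IntervalIntegrable (fplus e) volume 0 θ
  fminus_int : ∀ e θ, IntervalIntegrable (fminus e) volume 0 θ

/-- The queue length `q_e(θ) = F⁺_e(θ) − F⁻_e(θ + τ_e)`. -/
noncomputable def queueOf (N : Network V E) (fplus fminus : E → ℝ → ℝ) (e : E) (θ : ℝ) : ℝ :=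
  (∫ ζ in (0:ℝ)..θ, fplus e ζ) - ∫ ζ in (0:ℝ)..(θ + N.time e), fminus e ζ

/-- The instantaneous travel time `c_e(θ) = τ_e + q_e(θ)/ν_e`. -/
noncomputable def ctimeOf (N : Network V E) (fplus fminus : E → ℝ → ℝ) (e : E) (θ : ℝ) : ℝ :=
  N.time e + queueOf N fplus fminus e θ / N.cap e

/-- The node label `ℓ_v(θ)`: the shortest instantaneous travel time from `v` to the sink. -/
noncomputable def labelOf (N : Network V E) (fplus fminus : E → ℝ → ℝ) (v : V) (θ : ℝ) : ℝ :=
  sInf { r : ℝ | ∃ L : List E, IsWalk N.tail N.head v N.sink L ∧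
                  r = (L.map (fun e => ctimeOf N fplus fminus e θ)).sum }

/-- Edge `e` is active at time `θ`: `ℓ_{tail e}(θ) = c_e(θ) + ℓ_{head e}(θ)`. -/
def ActiveOf (N : Network V E) (fplus fminus : E → ℝ → ℝ) (e : E) (θ : ℝ) : Prop :=
  labelOf N fplus fminus (N.tail e) θ =
    ctimeOf N fplus fminus e θ + labelOf N fplus fminus (N.head e) θ

/-- Feasibility of a flow over time: flow conservation (i)/(ii), no outflow before `τ_e`
(iii), and queues operating at capacity (iv). -/
def Feasible (N : Network V E) (f : FlowOverTime N) : Prop :=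
  (∀ v, v ≠ N.sink → ∀ θ : ℝ, 0 ≤ θ →
      (∑ e ∈ N.outEdges v, f.fplus e θ) - (∑ e ∈ N.inEdges v, f.fminus e θ) = N.u v θ) ∧
  (∀ θ : ℝ, 0 ≤ θ →
      (∑ e ∈ N.outEdges N.sink, f.fplus e θ) - (∑ e ∈ N.inEdges N.sink, f.fminus e θ) ≤ 0) ∧
  (∀ e, ∀ θ : ℝ, 0 ≤ θ → θ < N.time e → f.fminus e θ = 0) ∧
  (∀ e, ∀ θ : ℝ, 0 ≤ θ →
      f.fminus e (θ + N.time e) =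
        if 0 < queueOf N f.fplus f.fminus e θ then N.cap e
        else min (f.fplus e θ) (N.cap e))

/-- An instantaneous dynamic equilibrium: a feasible flow that only sends flow
into currently active edges. -/
def IsIDE (N : Network V E) (f : FlowOverTime N) : Prop :=
  Feasible N f ∧
  ∀ e, ∀ θ : ℝ, 0 ≤ θ → 0 < f.fplus e θ → ActiveOf N f.fplus f.fminus e θ

/-- `g` is almost everywhere constant on the set `S`. -/
def AEConstOn (g : ℝ → ℝ) (S : Set ℝ) : Prop :=
  ∃ c : ℝ, ∀ᵐ θ ∂(volume.restrict S), g θ = c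

/-- The `i`-th segment of the partition `0 = t 0 < t 1 < ⋯ < t n < ∞`. -/
def phaseSeg (n : ℕ) (t : ℕ → ℝ) (i : ℕ) : Set ℝ :=
  if i < n then Set.Ioo (t i) (t (i+1)) else Set.Ioi (t n)

/-- `ℝ≥0` splits (up to finitely many points) into the `n+1` intervals given by
`t`, on each of which all edge in- and outflow rates are a.e. constant; i.e. the
flow has at most `n+1` phases. -/
def PhasePartition (N : Network V E) (f : FlowOverTime N) (n : ℕ) (t : ℕ → ℝ) : Prop :=
  t 0 = 0 ∧ (∀ i, i < n → t i < t (i+1)) ∧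
  ∀ i, i ≤ n → ∀ e, AEConstOn (f.fplus e) (phaseSeg n t i) ∧ AEConstOn (f.fminus e) (phaseSeg n t i)


section QueueAux

open intervalIntegral MeasureTheory

private lemma ae_ne' (c : ℝ) : ∀ᵐ x : ℝ ∂volume, x ≠ c := by
  have h : {a : ℝ | ¬ a ≠ c} = {c} := by ext x; simp
  rw [MeasureTheory.ae_iff, h]
  exact measure_singleton c

private lemma aeIccOfIoo {P : ℝ → Prop} {s θ : ℝ} (h : ∀ x ∈ Set.Ioo s θ, P x) :
    ∀ᵐ x ∂(volume.restrict (Set.Icc s θ)), P x := by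
  rw [MeasureTheory.ae_restrict_iff' measurableSet_Icc]
  filter_upwards [ae_ne' s, ae_ne' θ] with x hxs hxθ hmem
  exact h x ⟨lt_of_le_of_ne hmem.1 (Ne.symm hxs), lt_of_le_of_ne hmem.2 hxθ⟩

private lemma convexOn_congr' {s : Set ℝ} {g h : ℝ → ℝ} (hg : ConvexOn ℝ s g)
    (he : ∀ x ∈ s, g x = h x) : ConvexOn ℝ s h := by
  refine ⟨hg.1, fun x hx y hy α β hα hβ hαβ => ?_⟩
  rw [← he x hx, ← he y hy, ← he _ (hg.1 hx hy hα hβ hαβ)]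
  exact hg.2 hx hy hα hβ hαβ

private lemma convexOn_affine (s : Set ℝ) (hs : Convex ℝ s) (m c : ℝ) :
    ConvexOn ℝ s (fun x => m * x + c) := by
  refine ⟨hs, fun x _ y _ α β _ _ hαβ => ?_⟩
  simp only [smul_eq_mul]
  apply le_of_eq
  linear_combination (-c) * hαβ

variable {V E : Type} [Fintype V] [DecidableEq V] [Fintype E] [DecidableEq E]
variable (N : Network V E) (f : FlowOverTime N) (e : E)

private lemma fplusInt (s θ : ℝ) : IntervalIntegrable (f.fplus e) volume s θ :=
  (f.fplus_int e s).symm.trans (f.fplus_int e θ)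

private lemma fminusInt (s θ : ℝ) : IntervalIntegrable (f.fminus e) volume s θ :=
  (f.fminus_int e s).symm.trans (f.fminus_int e θ)

private lemma fminusShiftInt (s θ : ℝ) :
    IntervalIntegrable (fun ζ => f.fminus e (ζ + N.time e)) volume s θ := by
  have h := (fminusInt N f e (s + N.time e) (θ + N.time e)).comp_add_right (N.time e)
  simpa using h

private lemma queueCont : Continuous (queueOf N f.fplus f.fminus e) := by
  unfold queueOf
  have h1 : Continuous fun θ : ℝ => ∫ ζ in (0:ℝ)..θ, f.fplus e ζ :=
    intervalIntegral.continuous_primitive (fun s θ => fplusInt N f e s θ) 0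
  have h2 : Continuous fun θ : ℝ => ∫ ζ in (0:ℝ)..θ, f.fminus e ζ :=
    intervalIntegral.continuous_primitive (fun s θ => fminusInt N f e s θ) 0
  exact h1.sub (h2.comp (continuous_id.add continuous_const))

private lemma queue_diff (s θ : ℝ) :
    queueOf N f.fplus f.fminus e θ
      = queueOf N f.fplus f.fminus e s + (∫ ζ in s..θ, f.fplus e ζ)
        - ∫ ζ in s..θ, f.fminus e (ζ + N.time e) := by
  unfold queueOf
  have h1 : (∫ ζ in (0:ℝ)..s, f.fplus e ζ) + ∫ ζ in s..θ, f.fplus e ζ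
      = ∫ ζ in (0:ℝ)..θ, f.fplus e ζ :=
    intervalIntegral.integral_add_adjacent_intervals (f.fplus_int e s) (fplusInt N f e s θ)
  have h2 : (∫ ζ in (0:ℝ)..(s + N.time e), f.fminus e ζ)
        + ∫ ζ in (s + N.time e)..(θ + N.time e), f.fminus e ζ
      = ∫ ζ in (0:ℝ)..(θ + N.time e), f.fminus e ζ :=
    intervalIntegral.integral_add_adjacent_intervals (f.fminus_int e _)
      (fminusInt N f e _ _)
  have h3 : ∫ ζ in s..θ, f.fminus e (ζ + N.time e)
      = ∫ ζ in (s + N.time e)..(θ + N.time e), f.fminus e ζ :=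
    intervalIntegral.integral_comp_add_right _ _
  rw [h3]; linarith

private lemma queueZero (hf : Feasible N f) : queueOf N f.fplus f.fminus e 0 = 0 := by
  unfold queueOf
  rw [intervalIntegral.integral_same, zero_add]
  have h : ∫ ζ in (0:ℝ)..(N.time e), f.fminus e ζ = ∫ _ in (0:ℝ)..(N.time e), (0:ℝ) := by
    apply intervalIntegral.integral_congr_ae
    filter_upwards [ae_ne' (N.time e)] with x hx hmem
    rw [Set.uIoc_of_le (N.time_pos e).le] at hmem
    exact hf.2.2.1 e x hmem.1.le (lt_of_le_of_ne hmem.2 hx)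
  rw [h]; simp

private lemma fminus_le_cap (hf : Feasible N f) (ζ : ℝ) (hζ : 0 ≤ ζ) :
    f.fminus e (ζ + N.time e) ≤ N.cap e := by
  rw [hf.2.2.2 e ζ hζ]
  split
  · exact le_refl _
  · exact min_le_right _ _

private lemma shift_integral_le (hf : Feasible N f) (s θ : ℝ) (hs : 0 ≤ s) (hsθ : s ≤ θ) :
    ∫ ζ in s..θ, f.fminus e (ζ + N.time e) ≤ N.cap e * (θ - s) := by
  have h := intervalIntegral.integral_mono_on hsθ (fminusShiftInt N f e s θ)
    intervalIntegrable_const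
    (fun x hx => fminus_le_cap N f e hf x (le_trans hs hx.1))
  simpa [intervalIntegral.integral_const, smul_eq_mul, mul_comm] using h

private lemma queue_lower (hf : Feasible N f) (s θ : ℝ) (hs : 0 ≤ s) (hsθ : s ≤ θ) :
    queueOf N f.fplus f.fminus e s - N.cap e * (θ - s) ≤ queueOf N f.fplus f.fminus e θ := by
  rw [queue_diff N f e s θ]
  have h1 : 0 ≤ ∫ ζ in s..θ, f.fplus e ζ :=
    intervalIntegral.integral_nonneg hsθ (fun x _ => f.fplus_nonneg e x)
  have h2 := shift_integral_le N f e hf s θ hs hsθ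
  linarith

private lemma queue_nonneg (hf : Feasible N f) (θ : ℝ) (hθ : 0 ≤ θ) :
    0 ≤ queueOf N f.fplus f.fminus e θ := by
  by_contra hneg
  push_neg at hneg
  set S := Set.Icc 0 θ ∩ (queueOf N f.fplus f.fminus e) ⁻¹' Set.Ici 0 with hS
  have hScpt : IsCompact S := isCompact_Icc.inter_right (isClosed_Ici.preimage (queueCont N f e))
  have hSne : S.Nonempty := ⟨0, ⟨le_refl 0, hθ⟩, by
    simp [Set.mem_preimage, queueZero N f e hf]⟩
  have hsS : sSup S ∈ S := hScpt.sSup_mem hSne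
  set s := sSup S with hs
  have hsθ : s ≤ θ := hsS.1.2
  have hs0 : 0 ≤ s := hsS.1.1
  have hqs : 0 ≤ queueOf N f.fplus f.fminus e s := hsS.2
  have hneg' : ∀ ζ ∈ Set.Ioo s θ, queueOf N f.fplus f.fminus e ζ < 0 := by
    intro ζ hζ
    by_contra hc; push_neg at hc
    have hmem : ζ ∈ S := ⟨⟨le_trans hs0 hζ.1.le, hζ.2.le⟩, hc⟩
    exact absurd (le_csSup hScpt.bddAbove hmem) (not_le.mpr hζ.1)
  have hkey : ∀ ζ ∈ Set.Ioo s θ, f.fminus e (ζ + N.time e) ≤ f.fplus e ζ := by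
    intro ζ hζ
    have h4 := hf.2.2.2 e ζ (le_trans hs0 hζ.1.le)
    rw [if_neg (not_lt.mpr (hneg' ζ hζ).le)] at h4
    rw [h4]; exact min_le_left _ _
  have hint : 0 ≤ ∫ ζ in s..θ, (f.fplus e ζ - f.fminus e (ζ + N.time e)) := by
    apply intervalIntegral.integral_nonneg_of_ae_restrict hsθ
    exact aeIccOfIoo (fun x hx => sub_nonneg.mpr (hkey x hx))
  rw [intervalIntegral.integral_sub (fplusInt N f e s θ) (fminusShiftInt N f e s θ)] at hint
  have hd := queue_diff N f e s θ
  linarith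

private lemma queue_exact (hf : Feasible N f) {a b s θ : ℝ}
    (hzero : ∀ᵐ ζ : ℝ ∂volume, ζ ∈ Set.Ioo a b → f.fplus e ζ = 0)
    (hs : 0 ≤ s) (has : a ≤ s) (hsθ : s ≤ θ) (hθb : θ ≤ b)
    (hq : ∀ ζ ∈ Set.Ioo s θ, 0 < queueOf N f.fplus f.fminus e ζ) :
    queueOf N f.fplus f.fminus e θ
      = queueOf N f.fplus f.fminus e s - N.cap e * (θ - s) := by
  rw [queue_diff N f e s θ]
  have h1 : ∫ ζ in s..θ, f.fplus e ζ = 0 := by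
    rw [show (0:ℝ) = ∫ _ in s..θ, (0:ℝ) by simp]
    apply intervalIntegral.integral_congr_ae
    filter_upwards [hzero, ae_ne' θ] with x hx hxθ hmem
    rw [Set.uIoc_of_le hsθ] at hmem
    exact hx ⟨lt_of_le_of_lt has hmem.1, lt_of_lt_of_le (lt_of_le_of_ne hmem.2 hxθ) hθb⟩
  have h2 : ∫ ζ in s..θ, f.fminus e (ζ + N.time e) = N.cap e * (θ - s) := by
    have hc : ∫ ζ in s..θ, f.fminus e (ζ + N.time e) = ∫ _ in s..θ, N.cap e := by
      apply intervalIntegral.integral_congr_ae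
      filter_upwards [ae_ne' θ] with x hxθ hmem
      rw [Set.uIoc_of_le hsθ] at hmem
      have hx0 : 0 ≤ x := le_trans hs hmem.1.le
      have h4 := hf.2.2.2 e x hx0
      rw [if_pos (hq x ⟨hmem.1, lt_of_le_of_ne hmem.2 hxθ⟩)] at h4
      exact h4
    rw [hc]
    simp [smul_eq_mul, mul_comm]
  rw [h1, h2]; ring

private lemma queue_formula (hf : Feasible N f) {a b : ℝ} (ha : 0 ≤ a)
    (hzero : ∀ᵐ ζ : ℝ ∂volume, ζ ∈ Set.Ioo a b → f.fplus e ζ = 0)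
    (θ : ℝ) (hθ : θ ∈ Set.Icc a b) :
    queueOf N f.fplus f.fminus e θ
      = max (queueOf N f.fplus f.fminus e a - N.cap e * (θ - a)) 0 := by
  obtain ⟨haθ, hθb⟩ := hθ
  have hcap := N.cap_pos e
  have hqa : 0 ≤ queueOf N f.fplus f.fminus e a := queue_nonneg N f e hf a ha
  by_cases hcase : N.cap e * (θ - a) ≤ queueOf N f.fplus f.fminus e a
  · have hexact := queue_exact N f e hf hzero ha (le_refl a) haθ hθb (fun ζ hζ => by
      have hlow := queue_lower N f e hf a ζ ha hζ.1.le
      have hmul : N.cap e * (ζ - a) < N.cap e * (θ - a) :=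
        mul_lt_mul_of_pos_left (by linarith [hζ.2]) hcap
      linarith)
    rw [hexact, max_eq_left (by linarith)]
  · push_neg at hcase
    have hθa : a < θ := by
      rcases lt_or_eq_of_le haθ with h | h
      · exact h
      · exfalso; rw [← h] at hcase; simp at hcase; linarith
    set θs := a + queueOf N f.fplus f.fminus e a / N.cap e with hθsdef
    have hdiv : queueOf N f.fplus f.fminus e a / N.cap e < θ - a :=
      (div_lt_iff₀ hcap).mpr (by linarith [mul_comm (θ - a) (N.cap e)])
    have hθs_lt : θs < θ := by rw [hθsdef]; linarith
    have hθs_ge : a ≤ θs := by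
      rw [hθsdef]; linarith [div_nonneg hqa hcap.le]
    have hmulθs : N.cap e * (θs - a) = queueOf N f.fplus f.fminus e a := by
      rw [hθsdef]; field_simp; ring
    have hqθs : queueOf N f.fplus f.fminus e θs = 0 := by
      have hx := queue_exact N f e hf hzero ha (le_refl a) hθs_ge
        (le_trans hθs_lt.le hθb) (fun ζ hζ => by
          have hlow := queue_lower N f e hf a ζ ha hζ.1.le
          have hmul : N.cap e * (ζ - a) < N.cap e * (θs - a) :=
            mul_lt_mul_of_pos_left (by linarith [hζ.2]) hcap
          rw [hmulθs] at hmul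
          linarith)
      rw [hx, hmulθs]; ring
    rw [max_eq_right (by nlinarith)]
    by_contra hne
    have hqθ : 0 < queueOf N f.fplus f.fminus e θ :=
      lt_of_le_of_ne (queue_nonneg N f e hf θ (le_trans ha haθ)) (Ne.symm hne)
    set S := Set.Icc θs θ ∩ (queueOf N f.fplus f.fminus e) ⁻¹' Set.Iic 0 with hS
    have hScpt : IsCompact S :=
      isCompact_Icc.inter_right (isClosed_Iic.preimage (queueCont N f e))
    have hSne : S.Nonempty := ⟨θs, ⟨le_refl _, hθs_lt.le⟩, by
      simp [Set.mem_preimage, hqθs]⟩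
    have hsS : sSup S ∈ S := hScpt.sSup_mem hSne
    set s := sSup S with hsdef
    have hsθ : s ≤ θ := hsS.1.2
    have hsa : a ≤ s := le_trans hθs_ge hsS.1.1
    have hs0 : 0 ≤ s := le_trans ha hsa
    have hqs : queueOf N f.fplus f.fminus e s = 0 :=
      le_antisymm hsS.2 (queue_nonneg N f e hf s hs0)
    have hsltθ : s < θ := by
      rcases lt_or_eq_of_le hsθ with h | h
      · exact h
      · exfalso; rw [h] at hqs; linarith
    have hpos : ∀ ζ ∈ Set.Ioo s θ, 0 < queueOf N f.fplus f.fminus e ζ := by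
      intro ζ hζ
      by_contra hc; push_neg at hc
      have hmem : ζ ∈ S := ⟨⟨le_trans hsS.1.1 hζ.1.le, hζ.2.le⟩, hc⟩
      exact absurd (le_csSup hScpt.bddAbove hmem) (not_le.mpr hζ.1)
    have hx := queue_exact N f e hf hzero hs0 hsa hsθ hθb hpos
    rw [hqs] at hx
    nlinarith [mul_pos hcap (sub_pos.mpr hsltθ)]

end QueueAux

/-- If `f⁺_e` vanishes almost everywhere on an interval `(a,b) ⊆ ℝ≥0`,
then `q_e(θ) = max{q_e(a) − ν_e(θ−a), 0}` on `[a,b]`; in particular `q_e`, the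
instantaneous travel time `c_e`, and `c_e + ℓ` for any affine `ℓ` are convex on `[a,b]`. -/

theorem queue_on_inactive_interval
    {V E : Type} [Fintype V] [DecidableEq V] [Fintype E] [DecidableEq E]
    (N : Network V E) (hbdd : N.BddInflow)
    (f : FlowOverTime N) (hf : Feasible N f)
    (e : E) (a b : ℝ) (ha : 0 ≤ a)
    (hzero : ∀ᵐ ζ : ℝ ∂volume, ζ ∈ Set.Ioo a b → f.fplus e ζ = 0) :
    (∀ θ ∈ Set.Icc a b,
      queueOf N f.fplus f.fminus e θ
        = max (queueOf N f.fplus f.fminus e a - N.cap e * (θ - a)) 0) ∧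
    ConvexOn ℝ (Set.Icc a b) (queueOf N f.fplus f.fminus e) ∧
    ConvexOn ℝ (Set.Icc a b) (ctimeOf N f.fplus f.fminus e) ∧
    ∀ m c : ℝ, ConvexOn ℝ (Set.Icc a b)
      (fun θ => ctimeOf N f.fplus f.fminus e θ + (m * θ + c)) := by
  have hform : ∀ θ ∈ Set.Icc a b,
      queueOf N f.fplus f.fminus e θ
        = max (queueOf N f.fplus f.fminus e a - N.cap e * (θ - a)) 0 :=
    fun θ hθ => queue_formula N f e hf ha hzero θ hθ
  have hcap := N.cap_pos e
  have hg : ConvexOn ℝ (Set.Icc a b)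
      (fun θ => max (queueOf N f.fplus f.fminus e a - N.cap e * (θ - a)) 0) := by
    have h1 : ConvexOn ℝ (Set.Icc a b)
        (fun θ => (-(N.cap e)) * θ + (queueOf N f.fplus f.fminus e a + N.cap e * a)) :=
      convexOn_affine _ (convex_Icc a b) _ _
    have h2 : ConvexOn ℝ (Set.Icc a b) (fun _ : ℝ => (0:ℝ)) :=
      convexOn_const 0 (convex_Icc a b)
    refine convexOn_congr' (h1.sup h2) (fun x _ => ?_)
    simp only [Pi.sup_apply]
    congr 1
    ring
  have hqconv : ConvexOn ℝ (Set.Icc a b) (queueOf N f.fplus f.fminus e) :=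
    convexOn_congr' hg (fun x hx => (hform x hx).symm)
  have hcconv : ConvexOn ℝ (Set.Icc a b) (ctimeOf N f.fplus f.fminus e) := by
    have h1 : ConvexOn ℝ (Set.Icc a b)
        (fun θ => (1 / N.cap e) • queueOf N f.fplus f.fminus e θ) :=
      hqconv.smul (by positivity)
    have h2 : ConvexOn ℝ (Set.Icc a b) (fun _ : ℝ => N.time e) :=
      convexOn_const _ (convex_Icc a b)
    refine convexOn_congr' (h2.add h1) (fun x _ => ?_)
    simp only [Pi.add_apply, smul_eq_mul, ctimeOf]
    rw [div_eq_mul_inv]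
    ring
  refine ⟨hform, hqconv, hcconv, fun m c => ?_⟩
  have haff : ConvexOn ℝ (Set.Icc a b) (fun θ : ℝ => m * θ + c) :=
    convexOn_affine _ (convex_Icc a b) m c
  exact convexOn_congr' (hcconv.add haff) (fun x _ => rfl)
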